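/- Let S = K[x_1,...,x_m] with m ≥ 3, 1 ≤ j < m, X = (x_1,...,x_j), Y = (x_{j+1},...,x_m), m = X + Y, u ≥ 1 and J = (X² + Y²)^u. Then no monomial of degree 2u − 1 lies in the colon ideal J : m. Consequently the socle of A = S/J is concentrated in degree 2u, i.e., A is a level algebra of socle degree 2u. -/
import Mathlib


open MvPolynomial

namespace Stmt2Aux

variable {K : Type*} [Field K] {m : ℕ}

/-- total degree in the first block of variables -/
def degA (j : ℕ) (d : Fin m →₀ ℕ) : ℕ :=
  ∑ i ∈ Finset.univ.filter (fun i : Fin m => (i : ℕ) < j), d i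

/-- total degree in the second block of variables -/
def degB (j : ℕ) (d : Fin m →₀ ℕ) : ℕ :=
  ∑ i ∈ Finset.univ.filter (fun i : Fin m => ¬ (i : ℕ) < j), d i

lemma degA_add (j : ℕ) (d e : Fin m →₀ ℕ) : degA j (d + e) = degA j d + degA j e := by
  simp [degA, Finset.sum_add_distrib]

lemma degB_add (j : ℕ) (d e : Fin m →₀ ℕ) : degB j (d + e) = degB j d + degB j e := by
  simp [degB, Finset.sum_add_distrib]

lemma degA_single (j : ℕ) (i : Fin m) (n : ℕ) :
    degA j (Finsupp.single i n) = if (i : ℕ) < j then n else 0 := by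
  classical
  simp [degA, Finsupp.single_apply, Finset.sum_ite_eq]

lemma degB_single (j : ℕ) (i : Fin m) (n : ℕ) :
    degB j (Finsupp.single i n) = if (i : ℕ) < j then 0 else n := by
  classical
  simp only [degB, Finsupp.single_apply, Finset.sum_ite_eq, Finset.mem_filter,
    Finset.mem_univ, true_and]
  by_cases h : (i : ℕ) < j <;> simp [h]

lemma degA_add_degB (j : ℕ) (d : Fin m →₀ ℕ) :
    degA j d + degB j d = ∑ i : Fin m, d i := by
  classical
  exact Finset.sum_filter_add_sum_filter_not _ _ _

lemma degree_eq_univ_sum (d : Fin m →₀ ℕ) : d.degree = ∑ i : Fin m, d i := by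
  classical
  exact Finset.sum_subset (Finset.subset_univ _)
    (fun i _ hi => Finsupp.notMem_support_iff.mp hi)

/-- the weight `⌊degA/2⌋ + ⌊degB/2⌋` -/
def wt (j : ℕ) (d : Fin m →₀ ℕ) : ℕ := degA j d / 2 + degB j d / 2

lemma wt_superadd (j : ℕ) (d e : Fin m →₀ ℕ) : wt j d + wt j e ≤ wt j (d + e) := by
  simp only [wt, degA_add, degB_add]
  omega

variable (K)

/-- the ideal of polynomials all of whose monomials satisfy `P`,
for `P` closed under adding exponents on the left. -/
def suppIdeal (P : (Fin m →₀ ℕ) → Prop) (hP : ∀ d e, P e → P (d + e)) :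
    Ideal (MvPolynomial (Fin m) K) where
  carrier := {p | ∀ d ∈ p.support, P d}
  zero_mem' := by simp
  add_mem' := by
    classical
    intro p q hp hq d hd
    rcases Finset.mem_union.mp (MvPolynomial.support_add hd) with h | h
    exacts [hp d h, hq d h]
  smul_mem' := by
    classical
    intro c p hp d hd
    rw [smul_eq_mul] at hd
    obtain ⟨e1, he1, e2, he2, rfl⟩ := Finset.mem_add.mp (MvPolynomial.support_mul _ _ hd)
    exact hP e1 e2 (hp e2 he2)

lemma mem_suppIdeal_iff {P : (Fin m →₀ ℕ) → Prop} {hP} {p : MvPolynomial (Fin m) K} :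
    p ∈ suppIdeal K P hP ↔ ∀ d ∈ p.support, P d := Iff.rfl

lemma suppIdeal_mul {P Q R : (Fin m →₀ ℕ) → Prop} {hP hQ hR}
    (h : ∀ d e, P d → Q e → R (d + e)) {p q : MvPolynomial (Fin m) K}
    (hp : p ∈ suppIdeal K P hP) (hq : q ∈ suppIdeal K Q hQ) :
    p * q ∈ suppIdeal K R hR := by
  classical
  intro d hd
  obtain ⟨e1, he1, e2, he2, rfl⟩ := Finset.mem_add.mp (MvPolynomial.support_mul _ _ hd)
  exact h e1 e2 (hp e1 he1) (hq e2 he2)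

/-- the ideal of polynomials all of whose monomials have weight at least `u` -/
def Mu (j u : ℕ) : Ideal (MvPolynomial (Fin m) K) :=
  suppIdeal K (fun d => u ≤ wt j d)
    (fun d e he => le_trans he (le_trans (Nat.le_add_left _ _) (wt_superadd j d e)))

variable {K}

lemma span_block1_le (j : ℕ) :
    Ideal.span ((X : Fin m → MvPolynomial (Fin m) K) '' {i | (i : ℕ) < j}) ≤
      suppIdeal K (fun d => 1 ≤ degA j d)
        (fun d e he => le_trans he (by rw [degA_add]; omega)) := by
  rw [Ideal.span_le]
  rintro _ ⟨i, hi, rfl⟩ d hd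
  classical
  rw [MvPolynomial.support_X (R := K)] at hd
  have hi' : (i : ℕ) < j := hi
  rw [Finset.mem_singleton.mp hd, degA_single, if_pos hi']

lemma span_block2_le (j : ℕ) :
    Ideal.span ((X : Fin m → MvPolynomial (Fin m) K) '' {i | j ≤ (i : ℕ)}) ≤
      suppIdeal K (fun d => 1 ≤ degB j d)
        (fun d e he => le_trans he (by rw [degB_add]; omega)) := by
  rw [Ideal.span_le]
  rintro _ ⟨i, hi, rfl⟩ d hd
  classical
  rw [MvPolynomial.support_X (R := K)] at hd
  have hi' : j ≤ (i : ℕ) := hi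
  rw [Finset.mem_singleton.mp hd, degB_single, if_neg (Nat.not_lt.mpr hi')]

lemma base_le_Mu1 (j : ℕ) :
    Ideal.span ((X : Fin m → MvPolynomial (Fin m) K) '' {i | (i : ℕ) < j}) ^ 2 +
      Ideal.span ((X : Fin m → MvPolynomial (Fin m) K) '' {i | j ≤ (i : ℕ)}) ^ 2 ≤
      Mu K j 1 := by
  apply sup_le
  · rw [pow_two]
    rw [Ideal.mul_le]
    intro r hr s hs
    refine suppIdeal_mul K (R := fun d => 1 ≤ wt j d) ?_
      (span_block1_le j hr) (span_block1_le j hs)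
    intro d e hd he
    simp only [wt, degA_add, degB_add]
    omega
  · rw [pow_two]
    rw [Ideal.mul_le]
    intro r hr s hs
    refine suppIdeal_mul K (R := fun d => 1 ≤ wt j d) ?_
      (span_block2_le j hr) (span_block2_le j hs)
    intro d e hd he
    simp only [wt, degA_add, degB_add]
    omega

lemma J_le_Mu (j u : ℕ) :
    (Ideal.span ((X : Fin m → MvPolynomial (Fin m) K) '' {i | (i : ℕ) < j}) ^ 2 +
      Ideal.span ((X : Fin m → MvPolynomial (Fin m) K) '' {i | j ≤ (i : ℕ)}) ^ 2) ^ u ≤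
      Mu K j u := by
  induction u with
  | zero => intro p _ d _; exact Nat.zero_le _
  | succ u ih =>
    rw [pow_succ, Ideal.mul_le]
    intro r hr s hs
    refine suppIdeal_mul K (R := fun d => u + 1 ≤ wt j d) ?_ (ih hr) (base_le_Mu1 j hs)
    intro d e hd he
    have := wt_superadd j d e
    omega

lemma monomial_split {d : Fin m →₀ ℕ} {i : Fin m} (h : d i ≠ 0) :
    d = Finsupp.single i 1 + (d - Finsupp.single i 1) := by
  ext a
  simp only [Finsupp.add_apply, Finsupp.tsub_apply, Finsupp.single_apply]
  split_ifs with hia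
  · subst hia; omega
  · omega

lemma X_mul_monomial_one (i : Fin m) (e : Fin m →₀ ℕ) :
    (X i : MvPolynomial (Fin m) K) * monomial e 1 = monomial (Finsupp.single i 1 + e) 1 := by
  rw [X, monomial_mul, one_mul]

lemma mem_I2_pow (j : ℕ) (b : ℕ) :
    ∀ d : Fin m →₀ ℕ, b ≤ degB j d →
      monomial d (1 : K) ∈
        Ideal.span ((X : Fin m → MvPolynomial (Fin m) K) '' {i | j ≤ (i : ℕ)}) ^ b := by
  induction b with
  | zero => intro d _; simp [Ideal.one_eq_top]
  | succ b ih =>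
    intro d hd
    classical
    have h0 : degB j d ≠ 0 := by omega
    obtain ⟨i, hi, hine⟩ := Finset.exists_ne_zero_of_sum_ne_zero h0
    have himem : ¬ (i : ℕ) < j := (Finset.mem_filter.mp hi).2
    have hsplit := monomial_split hine
    have hdegB : degB j d = 1 + degB j (d - Finsupp.single i 1) := by
      conv_lhs => rw [hsplit]
      rw [degB_add, degB_single, if_neg himem]
    rw [hsplit, ← X_mul_monomial_one, pow_succ']
    exact Ideal.mul_mem_mul
      (Ideal.subset_span ⟨i, Nat.not_lt.mp himem, rfl⟩)
      (ih _ (by omega))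

lemma mem_I1_pow_mul (j : ℕ) (a : ℕ) :
    ∀ (b : ℕ) (d : Fin m →₀ ℕ), a ≤ degA j d → b ≤ degB j d →
      monomial d (1 : K) ∈
        Ideal.span ((X : Fin m → MvPolynomial (Fin m) K) '' {i | (i : ℕ) < j}) ^ a *
        Ideal.span ((X : Fin m → MvPolynomial (Fin m) K) '' {i | j ≤ (i : ℕ)}) ^ b := by
  induction a with
  | zero => intro b d _ hb; rw [pow_zero, one_mul]; exact mem_I2_pow j b d hb
  | succ a ih =>
    intro b d ha hb
    classical
    have h0 : degA j d ≠ 0 := by omega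
    obtain ⟨i, hi, hine⟩ := Finset.exists_ne_zero_of_sum_ne_zero h0
    have himem : (i : ℕ) < j := (Finset.mem_filter.mp hi).2
    have hsplit := monomial_split hine
    have hdegA : degA j d = 1 + degA j (d - Finsupp.single i 1) := by
      conv_lhs => rw [hsplit]
      rw [degA_add, degA_single, if_pos himem]
    have hdegB : degB j d = degB j (d - Finsupp.single i 1) := by
      conv_lhs => rw [hsplit]
      rw [degB_add, degB_single, if_pos himem, zero_add]
    rw [hsplit, ← X_mul_monomial_one, pow_succ', mul_assoc]
    exact Ideal.mul_mem_mul
      (Ideal.subset_span ⟨i, himem, rfl⟩)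
      (ih b _ (by omega) (by omega))

lemma monomial_mem_J (j u : ℕ) {d : Fin m →₀ ℕ} (h : u ≤ wt j d) :
    monomial d (1 : K) ∈
      (Ideal.span ((X : Fin m → MvPolynomial (Fin m) K) '' {i | (i : ℕ) < j}) ^ 2 +
        Ideal.span ((X : Fin m → MvPolynomial (Fin m) K) '' {i | j ≤ (i : ℕ)}) ^ 2) ^ u := by
  set I1 := Ideal.span ((X : Fin m → MvPolynomial (Fin m) K) '' {i | (i : ℕ) < j})
  set I2 := Ideal.span ((X : Fin m → MvPolynomial (Fin m) K) '' {i | j ≤ (i : ℕ)})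
  obtain ⟨a, b, hab, ha, hb⟩ :
      ∃ a b : ℕ, a + b = u ∧ 2 * a ≤ degA j d ∧ 2 * b ≤ degB j d := by
    rcases le_total (degA j d / 2) u with hle | hle
    · exact ⟨degA j d / 2, u - degA j d / 2, by omega, by omega, by
        simp only [wt] at h; omega⟩
    · exact ⟨u, 0, by omega, by omega, by omega⟩
  have hmem := mem_I1_pow_mul (K := K) j (2 * a) (2 * b) d ha hb
  have hle : I1 ^ (2 * a) * I2 ^ (2 * b) ≤ (I1 ^ 2 + I2 ^ 2) ^ u := by
    calc I1 ^ (2 * a) * I2 ^ (2 * b)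
        = (I1 ^ 2) ^ a * (I2 ^ 2) ^ b := by rw [← pow_mul, ← pow_mul]
      _ ≤ (I1 ^ 2 + I2 ^ 2) ^ a * (I1 ^ 2 + I2 ^ 2) ^ b :=
          Ideal.mul_mono (Ideal.pow_right_mono le_sup_left a)
            (Ideal.pow_right_mono le_sup_right b)
      _ = (I1 ^ 2 + I2 ^ 2) ^ u := by rw [← pow_add, hab]
  exact hle hmem

end Stmt2Aux

open Stmt2Aux

theorem stmt_2 {K : Type*} [Field K] (m j u : ℕ) (hm : 3 ≤ m) (hj1 : 1 ≤ j) (hjm : j < m)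
    (hu : 1 ≤ u)
    (J : Ideal (MvPolynomial (Fin m) K))
    (hJ : J = (Ideal.span ((X : Fin m → MvPolynomial (Fin m) K) '' {i | (i : ℕ) < j}) ^ 2 +
        Ideal.span ((X : Fin m → MvPolynomial (Fin m) K) '' {i | j ≤ (i : ℕ)}) ^ 2) ^ u)
    (mm : Ideal (MvPolynomial (Fin m) K))
    (hmm : mm = Ideal.span (Set.range (X : Fin m → MvPolynomial (Fin m) K))) :
    -- no monomial of degree `2u - 1` lies in `J : mm`
    (∀ d : Fin m →₀ ℕ, (∑ i : Fin m, d i) = 2 * u - 1 →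
        (monomial d (1 : K)) ∉ Submodule.colon J mm) ∧
    -- consequently the socle of `A = S/J` is concentrated in degree `2u` ...
    (∀ (p : MvPolynomial (Fin m) K) (k : ℕ), p.IsHomogeneous k →
        p ∈ Submodule.colon J mm → p ∉ J → k = 2 * u) ∧
    -- ... and it is nonzero there, i.e. `A` is a level algebra of socle degree `2u`
    (∃ p : MvPolynomial (Fin m) K, p.IsHomogeneous (2 * u) ∧
        p ∈ Submodule.colon J mm ∧ p ∉ J) := by
  classical
  have hJle : J ≤ Mu K j u := hJ ▸ J_le_Mu j u
  -- the two distinguished variables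
  set i0 : Fin m := ⟨0, by omega⟩ with hi0
  set ij : Fin m := ⟨j, hjm⟩ with hij
  have hi0lt : (i0 : ℕ) < j := hj1
  have hijge : ¬ (ij : ℕ) < j := by simp [hij]
  -- extraction from the colon ideal
  have hcolon_extract : ∀ p : MvPolynomial (Fin m) K, p ∈ Submodule.colon J mm →
      ∀ i : Fin m, X i * p ∈ J := by
    intro p hp i
    have hXi : (X i : MvPolynomial (Fin m) K) ∈ mm := by
      rw [hmm]; exact Ideal.subset_span (Set.mem_range_self i)
    have := Submodule.mem_colon.mp hp (X i) hXi
    rwa [smul_eq_mul, mul_comm] at this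
  -- membership in the colon ideal from the generators
  have hcolon_mk : ∀ p : MvPolynomial (Fin m) K, (∀ i : Fin m, X i * p ∈ J) →
      p ∈ Submodule.colon J mm := by
    intro p hp
    rw [Submodule.mem_colon]
    intro r hr
    rw [smul_eq_mul, mul_comm]
    have hmem : r * p ∈ mm * Ideal.span {p} :=
      Ideal.mul_mem_mul hr (Ideal.subset_span rfl)
    have hle : mm * Ideal.span {p} ≤ J := by
      rw [hmm, Ideal.span_mul_span', Ideal.span_le]
      rintro _ ⟨_, ⟨i, rfl⟩, _, rfl, rfl⟩
      exact hp i
    exact hle hmem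
  -- weights of shifted monomials in the colon ideal
  have hshift : ∀ (p : MvPolynomial (Fin m) K), p ∈ Submodule.colon J mm →
      ∀ d : Fin m →₀ ℕ, coeff d p ≠ 0 → ∀ i : Fin m,
        u ≤ wt j (Finsupp.single i 1 + d) := by
    intro p hp d hd i
    have h1 : X i * p ∈ J := hcolon_extract p hp i
    have h2 : Finsupp.single i 1 + d ∈ (X i * p).support := by
      rw [MvPolynomial.mem_support_iff, MvPolynomial.coeff_X_mul]
      exact hd
    exact hJle h1 _ h2
  refine ⟨?_, ?_, ?_⟩
  · -- part 1
    intro d hd hcol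
    have hc1 : coeff d (monomial d (1 : K)) ≠ 0 := by
      simp
    have hA := hshift _ hcol d hc1 i0
    have hB := hshift _ hcol d hc1 ij
    simp only [wt, degA_add, degB_add, degA_single, degB_single, if_pos hi0lt,
      if_neg hijge] at hA hB
    have htot := degA_add_degB j d
    rw [hd] at htot
    omega
  · -- part 2
    intro p k hk hcol hpJ
    have hbad : ∃ d ∈ p.support, monomial d (coeff d p) ∉ J := by
      by_contra h
      push_neg at h
      have hsum : (∑ v ∈ p.support, monomial v (coeff v p)) ∈ J :=
        Ideal.sum_mem _ h
      rw [MvPolynomial.support_sum_monomial_coeff] at hsum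
      exact hpJ hsum
    obtain ⟨d, hd, hdJ⟩ := hbad
    have hcne : coeff d p ≠ 0 := MvPolynomial.mem_support_iff.mp hd
    have hwlt : wt j d < u := by
      by_contra hwge
      push_neg at hwge
      have h1 : monomial d (1 : K) ∈ J := hJ ▸ monomial_mem_J j u hwge
      have h2 : monomial d (coeff d p) ∈ J := by
        have := J.mul_mem_left (C (coeff d p)) h1
        rwa [MvPolynomial.C_mul_monomial, mul_one] at this
      exact hdJ h2
    have hA := hshift p hcol d hcne i0
    have hB := hshift p hcol d hcne ij
    simp only [wt, degA_add, degB_add, degA_single, degB_single, if_pos hi0lt,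
      if_neg hijge] at hA hB hwlt
    have htot := degA_add_degB j d
    have hdeg : d.degree = k := by
      have := hk hcne
      rwa [Finsupp.degree_eq_weight_one]
    rw [degree_eq_univ_sum] at hdeg
    rw [hdeg] at htot
    omega
  · -- part 3
    refine ⟨monomial (Finsupp.single i0 1 + Finsupp.single ij (2 * u - 1)) (1 : K),
      ?_, ?_, ?_⟩
    · apply isHomogeneous_monomial
      rw [degree_eq_univ_sum, ← degA_add_degB j, degA_add, degB_add,
        degA_single, degB_single, degA_single, degB_single, if_pos hi0lt,
        if_pos hi0lt, if_neg hijge, if_neg hijge]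
      omega
    · apply hcolon_mk
      intro i
      rw [X_mul_monomial_one, hJ]
      apply monomial_mem_J
      simp only [wt, degA_add, degB_add, degA_single, degB_single, if_pos hi0lt,
        if_neg hijge]
      by_cases hi : (i : ℕ) < j <;> simp only [hi, if_pos, if_neg, if_true, if_false] <;> omega
    · intro hmem
      have hsupp : Finsupp.single i0 1 + Finsupp.single ij (2 * u - 1) ∈
          (monomial (Finsupp.single i0 1 + Finsupp.single ij (2 * u - 1)) (1 : K)).support := by
        rw [MvPolynomial.mem_support_iff, MvPolynomial.coeff_monomial, if_pos rfl]
        exact one_ne_zero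
      have := hJle hmem _ hsupp
      simp only [wt, degA_add, degB_add, degA_single, degB_single, if_pos hi0lt,
        if_neg hijge] at this
      omega
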